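/- arXiv:1010.5673 — 2 statements merged into one kernel-verified Lean document; each statement's English description precedes it below -/
import Mathlib

section
/- Under the standard preorder bijection between Dyck paths of semilength n and ordered trees with n edges, the number of up steps at height h in a Dyck path equals the number of edges at level h in the corresponding tree, and the number of exterior pairs of the path equals the number of exterior edges of the tree. -/
/-- A Dyck path of semilength `n`, encoded as a list of booleans where
`true` is an up step `(1,1)` and `false` is a down step `(1,-1)`;
the path never goes below the x-axis. -/
def IsDyckPath (n : ℕ) (p : List Bool) : Prop :=
  p.length = 2 * n ∧ p.count true = n ∧
  ∀ i, (p.take i).count false ≤ (p.take i).count true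

/-- The height of the `i`-th step: the y-coordinate reached after step `i`.
For an up step this is the height `h` such that the step rises from `y = h-1` to `y = h`. -/
def stepHeight (p : List Bool) (i : ℕ) : ℕ :=
  (p.take (i + 1)).count true - (p.take (i + 1)).count false

/-- The number of up steps of `p` at height `h` with `h ≡ c (mod m)`. -/
def upStepsMod (m c : ℕ) (p : List Bool) : ℕ :=
  ((Finset.range p.length).filter
    (fun i => p.getD i false = true ∧ stepHeight p i % m = c)).card


/-- The number of up steps of `p` at height exactly `h`. -/
def upStepsAtHeight (h : ℕ) (p : List Bool) : ℕ :=
  ((Finset.range p.length).filter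
    (fun i => p.getD i false = true ∧ stepHeight p i = h)).card

/-- The up step at position `i` is matched with the down step at position `j`:
the steps strictly between them form a balanced nonnegative (Dyck) word. -/
def Matched (p : List Bool) (i j : ℕ) : Prop :=
  i < j ∧ j < p.length ∧ p.getD i false = true ∧ p.getD j true = false ∧
  (((p.drop (i + 1)).take (j - i - 1)).count true =
      ((p.drop (i + 1)).take (j - i - 1)).count false) ∧
  ∀ k < j - i - 1,
    ((((p.drop (i + 1)).take (j - i - 1)).take k).count false ≤
      (((p.drop (i + 1)).take (j - i - 1)).take k).count true)

/-- The section of `p` from position `a` to position `b` (inclusive) is a pyramid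
`U^h D^h`. -/
def IsPyramidSec (p : List Bool) (a b : ℕ) : Prop :=
  a ≤ b ∧ b < p.length ∧ b - a + 1 = 2 * ((b - a + 1) / 2) ∧
  (p.drop a).take (b - a + 1) =
    List.replicate ((b - a + 1) / 2) true ++ List.replicate ((b - a + 1) / 2) false

/-- A matched pair `(i, j)` is exterior if it does not belong to any pyramid,
equivalently the section of the path from `i` to `j` is not of the form `U^t D^t`. -/
def ExteriorPair (p : List Bool) (i j : ℕ) : Prop :=
  Matched p i j ∧ ¬ IsPyramidSec p i j

open scoped Classical in
/-- The number of exterior pairs of `p`. -/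
noncomputable def exteriorPairs (p : List Bool) : ℕ :=
  ((Finset.range p.length ×ˢ Finset.range p.length).filter
    (fun q : ℕ × ℕ => ExteriorPair p q.1 q.2)).card


/-- An ordered (plane) tree: an unlabeled rooted tree where the order of the subtrees
of each vertex is significant. -/
inductive OTree where
  | node : List OTree → OTree

namespace OTree

/-- The number of edges of an ordered tree. -/
def numEdges : OTree → ℕ
  | .node ts => (ts.attach.map (fun c => numEdges c.1 + 1)).sum
  decreasing_by
    simp_wf
    have := List.sizeOf_lt_of_mem c.2
    simp at this ⊢
    omega


/-- The number of leaves of an ordered tree (a tree with no edges has one leaf,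
its root). -/
def numLeaves : OTree → ℕ
  | .node [] => 1
  | .node (t :: ts) => ((t :: ts).attach.map (fun c => numLeaves c.1)).sum
  decreasing_by
    simp_wf
    have := List.sizeOf_lt_of_mem c.2
    simp at this ⊢
    omega


/-- The number of exterior edges: edges `uv` such that the planted subtree consisting
of `uv` and all descendants of `v` has at least two leaves. -/
def extEdges : OTree → ℕ
  | .node ts => (ts.attach.map
      (fun c => (if 2 ≤ numLeaves c.1 then 1 else 0) + extEdges c.1)).sum
  decreasing_by
    simp_wf
    have := List.sizeOf_lt_of_mem c.2
    simp at this ⊢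
    omega


/-- `edgesAtLevelFrom t cur h` is the number of edges of `t` at level `h`, where the
root of `t` is at distance `cur` from the global root (the level of an edge `uv` is
the distance from the root to the child `v`). -/
def edgesAtLevelFrom (t : OTree) (cur h : ℕ) : ℕ :=
  match t with
  | .node ts => (ts.attach.map
      (fun c => (if cur + 1 = h then 1 else 0) + edgesAtLevelFrom c.1 (cur + 1) h)).sum
  termination_by t
  decreasing_by
    simp_wf
    have := List.sizeOf_lt_of_mem c.2
    simp at this ⊢
    omega


/-- The number of edges of `t` at level `h`. -/
def edgesAtLevel (t : OTree) (h : ℕ) : ℕ := edgesAtLevelFrom t 0 h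

/-- `edgesLevelModFrom t cur m c`: the number of edges of `t` at level `h` with
`h ≡ c (mod m)`, the root being at distance `cur` from the global root. -/
def edgesLevelModFrom (t : OTree) (cur m c : ℕ) : ℕ :=
  match t with
  | .node ts => (ts.attach.map
      (fun x => (if (cur + 1) % m = c then 1 else 0) +
        edgesLevelModFrom x.1 (cur + 1) m c)).sum
  termination_by t
  decreasing_by
    simp_wf
    have := List.sizeOf_lt_of_mem x.2
    simp at this ⊢
    omega


/-- The number of edges of `t` at level `h` with `h ≡ c (mod m)`. -/
def edgesLevelMod (t : OTree) (m c : ℕ) : ℕ := edgesLevelModFrom t 0 m c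

/-- The preorder traversal word of an ordered tree: each edge contributes a `true`
(up step) when first passed going down and a `false` (down step) when passed going
up. -/
def toPath : OTree → List Bool
  | .node ts => (ts.attach.map (fun c => true :: (toPath c.1 ++ [false]))).flatten
  decreasing_by
    simp_wf
    have := List.sizeOf_lt_of_mem c.2
    simp at this ⊢
    omega


end OTree


/-! ### Auxiliary infrastructure -/

section HSum

/-- Signed height after `k` steps. -/
def hsum (p : List Bool) (k : ℕ) : ℤ :=
  ((p.take k).count true : ℤ) - ((p.take k).count false : ℤ)

lemma count_take_add (p : List Bool) (a m : ℕ) (c : Bool) :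
    (p.take a).count c + ((p.drop a).take m).count c = (p.take (a + m)).count c := by
  rw [List.take_add, List.count_append]

lemma hsum_zero (p : List Bool) : hsum p 0 = 0 := by simp [hsum]

lemma getD_eq_getD {p : List Bool} {i : ℕ} (h : i < p.length) (d d' : Bool) :
    p.getD i d = p.getD i d' := by
  rw [List.getD_eq_getElem p d h, List.getD_eq_getElem p d' h]

lemma take_succ_of_lt {p : List Bool} {i : ℕ} (h : i < p.length) (d : Bool) :
    p.take (i+1) = p.take i ++ [p.getD i d] := by
  rw [List.take_succ, List.getD_eq_getElem p d h, List.getElem?_eq_getElem h]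
  rfl

lemma hsum_succ {p : List Bool} {i : ℕ} (h : i < p.length) :
    hsum p (i+1) = hsum p i + (if p.getD i false = true then 1 else -1) := by
  rw [hsum, hsum, take_succ_of_lt h false]
  rcases hb : p.getD i false <;> simp [hb, List.count_append] <;> push_cast <;> ring

lemma hsum_true {p : List Bool} {i : ℕ} (h : i < p.length)
    (ht : p.getD i false = true) : hsum p (i+1) = hsum p i + 1 := by
  rw [hsum_succ h, ht]; simp

lemma hsum_false {p : List Bool} {i : ℕ} (h : i < p.length)
    (ht : p.getD i true = false) : hsum p (i+1) = hsum p i - 1 := by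
  rw [hsum_succ h, getD_eq_getD h false true, ht]; simp; ring

lemma hsum_append_le {a b : List Bool} {k : ℕ} (h : k ≤ a.length) :
    hsum (a ++ b) k = hsum a k := by
  unfold hsum; rw [List.take_append_of_le_length h]

lemma hsum_append_add (a b : List Bool) (k : ℕ) :
    hsum (a ++ b) (a.length + k) = hsum a a.length + hsum b k := by
  unfold hsum
  rw [List.take_add, List.take_left', List.drop_left', List.count_append,
    List.count_append, List.take_length]
  · push_cast; ring
  · rfl
  · rfl

/-- A balanced nonnegative word. -/
def Bal (p : List Bool) : Prop :=
  p.count true = p.count false ∧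
    ∀ k, (p.take k).count false ≤ (p.take k).count true

lemma Bal.nonneg {p : List Bool} (h : Bal p) (k : ℕ) : 0 ≤ hsum p k := by
  have := h.2 k
  unfold hsum; push_cast; omega

lemma Bal.full {p : List Bool} (h : Bal p) {k : ℕ} (hk : p.length ≤ k) :
    hsum p k = 0 := by
  unfold hsum
  rw [List.take_of_length_le hk]
  have := h.1
  push_cast; omega

lemma bal_nil : Bal [] := by constructor <;> simp [List.take_nil]

lemma bal_append {a b : List Bool} (ha : Bal a) (hb : Bal b) : Bal (a ++ b) := by
  constructor
  · rw [List.count_append, List.count_append, ha.1, hb.1]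
  · intro k
    rcases le_or_gt k a.length with h | h
    · rw [List.take_append_of_le_length h]; exact ha.2 k
    · rw [show k = a.length + (k - a.length) by omega, List.take_add,
        List.take_left', List.drop_left', List.count_append, List.count_append]
      · have := hb.2 (k - a.length)
        have := ha.1
        omega
      · rfl
      · rfl

lemma bal_wrap {x : List Bool} (hx : Bal x) : Bal (true :: x ++ [false]) := by
  constructor
  · simp [List.count_append, List.count_cons, hx.1]
  · intro k
    rcases k with _ | k
    · simp
    · show (List.take (k+1) (true :: (x ++ [false]))).count false ≤
        (List.take (k+1) (true :: (x ++ [false]))).count true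
      rw [List.take_succ_cons]
      rcases le_or_gt k x.length with h | h
      · rw [List.take_append_of_le_length h]
        have := hx.2 k
        simp [List.count_cons]
        omega
      · rw [List.take_of_length_le (by simp; omega : (x ++ [false]).length ≤ k)]
        simp [List.count_append, List.count_cons, hx.1]

end HSum


section MatchedLemmas

lemma matched_iff {p : List Bool} {i j : ℕ} :
    Matched p i j ↔ i < j ∧ j < p.length ∧ p.getD i false = true ∧
      p.getD j true = false ∧ hsum p j = hsum p (i+1) ∧
      ∀ k, i + 1 ≤ k → k ≤ j → hsum p (i+1) ≤ hsum p k := by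
  unfold Matched
  constructor
  · rintro ⟨h1, h2, h3, h4, h5, h6⟩
    have ct := count_take_add p (i+1) (j-i-1) true
    have cf := count_take_add p (i+1) (j-i-1) false
    rw [show i+1+(j-i-1) = j by omega] at ct cf
    have hbal : hsum p j = hsum p (i+1) := by unfold hsum; push_cast; omega
    refine ⟨h1, h2, h3, h4, hbal, ?_⟩
    intro k hk1 hk2
    rcases eq_or_lt_of_le hk2 with rfl | hk2'
    · rw [hbal]
    · have h6' := h6 (k - (i+1)) (by omega)
      rw [List.take_take, min_eq_left (by omega)] at h6'
      have ct' := count_take_add p (i+1) (k-(i+1)) true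
      have cf' := count_take_add p (i+1) (k-(i+1)) false
      rw [show i+1+(k-(i+1)) = k by omega] at ct' cf'
      unfold hsum; push_cast; omega
  · rintro ⟨h1, h2, h3, h4, h5, h6⟩
    have ct := count_take_add p (i+1) (j-i-1) true
    have cf := count_take_add p (i+1) (j-i-1) false
    rw [show i+1+(j-i-1) = j by omega] at ct cf
    unfold hsum at h5
    refine ⟨h1, h2, h3, h4, by omega, ?_⟩
    intro k hk
    rw [List.take_take, min_eq_left (by omega)]
    have h6' := h6 (i+1+k) (by omega) (by omega)
    unfold hsum at h6'
    have ct' := count_take_add p (i+1) k true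
    have cf' := count_take_add p (i+1) k false
    omega

lemma Matched.lt {p : List Bool} {i j : ℕ} (h : Matched p i j) : i < j := h.1

lemma Matched.lt_length {p : List Bool} {i j : ℕ} (h : Matched p i j) :
    j < p.length := h.2.1

lemma matched_unique_aux {p : List Bool} {i j j' : ℕ}
    (h : Matched p i j) (h' : Matched p i j') (hlt : j < j') : False := by
  rw [matched_iff] at h h'
  obtain ⟨h1, h2, h3, h4, h5, h6⟩ := h
  obtain ⟨h1', h2', h3', h4', h5', h6'⟩ := h'
  have hj1 : hsum p (j+1) = hsum p j - 1 :=
    hsum_false (lt_of_lt_of_le (by omega) (le_of_lt h2')) h4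
  have := h6' (j+1) (by omega) (by omega)
  omega

lemma matched_unique {p : List Bool} {i j j' : ℕ}
    (h : Matched p i j) (h' : Matched p i j') : j = j' := by
  rcases lt_trichotomy j j' with hlt | heq | hlt
  · exact absurd (matched_unique_aux h h' hlt) (by simp)
  · exact heq
  · exact absurd (matched_unique_aux h' h hlt) (by simp)

lemma matched_append_left_iff {a b : List Bool} {i j : ℕ} (hj : j < a.length) :
    Matched (a ++ b) i j ↔ Matched a i j := by
  rw [matched_iff, matched_iff]
  constructor
  · rintro ⟨h1, h2, h3, h4, h5, h6⟩
    refine ⟨h1, hj, ?_, ?_, ?_, ?_⟩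
    · rw [← List.getD_append a b false i (by omega)]; exact h3
    · rw [← List.getD_append a b true j hj]; exact h4
    · rw [← hsum_append_le (b := b) (by omega : j ≤ a.length),
        ← hsum_append_le (b := b) (by omega : i+1 ≤ a.length)]; exact h5
    · intro k hk1 hk2
      rw [← hsum_append_le (b := b) (by omega : k ≤ a.length),
        ← hsum_append_le (b := b) (by omega : i+1 ≤ a.length)]
      exact h6 k hk1 hk2
  · rintro ⟨h1, h2, h3, h4, h5, h6⟩
    refine ⟨h1, by rw [List.length_append]; omega, ?_, ?_, ?_, ?_⟩
    · rw [List.getD_append a b false i (by omega)]; exact h3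
    · rw [List.getD_append a b true j hj]; exact h4
    · rw [hsum_append_le (b := b) (by omega : j ≤ a.length),
        hsum_append_le (b := b) (by omega : i+1 ≤ a.length)]; exact h5
    · intro k hk1 hk2
      rw [hsum_append_le (b := b) (by omega : k ≤ a.length),
        hsum_append_le (b := b) (by omega : i+1 ≤ a.length)]
      exact h6 k hk1 hk2

lemma matched_append_right_iff {a b : List Bool} {i j : ℕ} :
    Matched (a ++ b) (a.length + i) (a.length + j) ↔ Matched b i j := by
  have hs : ∀ k, hsum (a ++ b) (a.length + k) = hsum a a.length + hsum b k := by
    intro k; rw [hsum_append_add]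
  rw [matched_iff, matched_iff]
  constructor
  · rintro ⟨h1, h2, h3, h4, h5, h6⟩
    refine ⟨by omega, by rw [List.length_append] at h2; omega, ?_, ?_, ?_, ?_⟩
    · rw [← h3, List.getD_append_right a b false (a.length + i) (by omega)]
      congr 1; omega
    · rw [← h4, List.getD_append_right a b true (a.length + j) (by omega)]
      congr 1; omega
    · rw [show a.length + i + 1 = a.length + (i+1) by omega, hs, hs] at h5
      omega
    · intro k hk1 hk2
      have h6' := h6 (a.length + k) (by omega) (by omega)
      rw [show a.length + i + 1 = a.length + (i+1) by omega, hs, hs] at h6'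
      omega
  · rintro ⟨h1, h2, h3, h4, h5, h6⟩
    refine ⟨by omega, by rw [List.length_append]; omega, ?_, ?_, ?_, ?_⟩
    · rw [List.getD_append_right a b false (a.length + i) (by omega)]
      rw [show a.length + i - a.length = i by omega]; exact h3
    · rw [List.getD_append_right a b true (a.length + j) (by omega)]
      rw [show a.length + j - a.length = j by omega]; exact h4
    · rw [hs j, show a.length + i + 1 = a.length + (i+1) by omega, hs (i+1)]
      omega
    · intro k hk1 hk2
      have hak : a.length ≤ k := by omega
      rw [show a.length + i + 1 = a.length + (i+1) by omega, hs (i+1),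
        show k = a.length + (k - a.length) by omega, hs (k - a.length)]
      have := h6 (k - a.length) (by omega) (by omega)
      omega

lemma matched_no_cross {a b : List Bool} (ha : Bal a) {i j : ℕ}
    (h : Matched (a ++ b) i j) (hi : i < a.length) : j < a.length := by
  by_contra hj
  push_neg at hj
  rw [matched_iff] at h
  obtain ⟨h1, h2, h3, h4, h5, h6⟩ := h
  have hps : hsum (a ++ b) (i+1) = hsum (a ++ b) i + 1 :=
    hsum_true (by rw [List.length_append]; omega) h3
  have hnn : 0 ≤ hsum (a ++ b) i := by
    rw [hsum_append_le (by omega : i ≤ a.length)]; exact ha.nonneg i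
  have hzero : hsum (a ++ b) a.length = 0 := by
    rw [hsum_append_le le_rfl]; exact ha.full le_rfl
  rcases eq_or_lt_of_le hj with rfl | hj'
  · omega
  · have := h6 a.length (by omega) (by omega)
    omega

end MatchedLemmas


section WrapLemmas

lemma hsum_cons (c : Bool) (x : List Bool) (k : ℕ) :
    hsum (c :: x) (k+1) = hsum [c] 1 + hsum x k := by
  have h := hsum_append_add [c] x k
  simpa [Nat.add_comm] using h

lemma hsum_singleton_true : hsum [true] 1 = 1 := by simp [hsum]

lemma matched_cons_iff {c : Bool} {r : List Bool} {i j : ℕ} :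
    Matched (c :: r) (i+1) (j+1) ↔ Matched r i j := by
  have h := matched_append_right_iff (a := [c]) (b := r) (i := i) (j := j)
  simpa [Nat.add_comm 1 i, Nat.add_comm 1 j] using h

lemma getD_wrap_succ (x : List Bool) (k : ℕ) (d : Bool) :
    (true :: x ++ [false]).getD (k+1) d = (x ++ [false]).getD k d := by
  simp [List.getD_cons_succ]

lemma hsum_wrap_succ (x : List Bool) (k : ℕ) :
    hsum (true :: x ++ [false]) (k+1) = 1 + hsum (x ++ [false]) k := by
  rw [show (true :: x ++ [false]) = true :: (x ++ [false]) by rfl, hsum_cons,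
    hsum_singleton_true]

lemma matched_wrap {x : List Bool} (hx : Bal x) :
    Matched (true :: x ++ [false]) 0 (x.length + 1) := by
  rw [matched_iff]
  refine ⟨by omega, by simp, by simp, ?_, ?_, ?_⟩
  · rw [getD_wrap_succ, List.getD_append_right x [false] true x.length le_rfl]
    simp
  · rw [hsum_wrap_succ, hsum_append_le le_rfl, hx.full le_rfl, zero_add,
      hsum_wrap_succ, hsum_zero]
  · intro k hk1 hk2
    rcases Nat.exists_eq_add_of_le hk1 with ⟨k', rfl⟩
    rw [zero_add, hsum_wrap_succ, show 1 + k' = k' + 1 by omega, hsum_wrap_succ,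
      hsum_zero]
    have : 0 ≤ hsum (x ++ [false]) k' := by
      rcases le_or_gt k' x.length with h | h
      · rw [hsum_append_le h]; exact hx.nonneg k'
      · have hk'' : k' = x.length + 1 := by omega
        omega
    omega

lemma matched_wrap_cases {x : List Bool} (hx : Bal x) {i j : ℕ}
    (h : Matched (true :: x ++ [false]) i j) :
    (i = 0 ∧ j = x.length + 1) ∨
      (1 ≤ i ∧ i ≤ x.length ∧ j ≤ x.length ∧ Matched x (i-1) (j-1)) := by
  rcases i with _ | i
  · exact Or.inl ⟨rfl, (matched_unique h (matched_wrap hx)).symm ▸ rfl⟩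
  · right
    have hiff := matched_iff.mp h
    obtain ⟨h1, h2, h3, h4, h5, h6⟩ := hiff
    have hlen : (true :: x ++ [false]).length = x.length + 2 := by simp
    have hi_lt : i < x.length := by
      by_contra hge
      push_neg at hge
      have hi2 : i + 1 < x.length + 2 := by omega
      have : i = x.length ∨ i = x.length + 1 := by omega
      rcases this with rfl | rfl
      · rw [getD_wrap_succ, List.getD_append_right x [false] false x.length le_rfl] at h3
        simp at h3
      · omega
    have hgx : x.getD i false = true := by
      rw [getD_wrap_succ, List.getD_append x [false] false i hi_lt] at h3
      exact h3
    have hxlt : i < x.length := hi_lt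
    have hj_le : j ≤ x.length := by
      by_contra hgt
      push_neg at hgt
      have hj : j = x.length + 1 := by omega
      subst hj
      have e1 : hsum (true :: x ++ [false]) (x.length + 1) = 1 := by
        rw [hsum_wrap_succ, hsum_append_le le_rfl, hx.full le_rfl]; ring
      have e2 : hsum (true :: x ++ [false]) (i + 1 + 1) =
          1 + hsum x (i + 1) := by
        rw [show i + 1 + 1 = (i+1) + 1 by rfl, hsum_wrap_succ,
          hsum_append_le (by omega)]
      have e3 : hsum x (i+1) = hsum x i + 1 := hsum_true hxlt hgx
      have e4 : 0 ≤ hsum x i := hx.nonneg i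
      rw [e1, e2, e3] at h5
      omega
    refine ⟨by omega, by omega, hj_le, ?_⟩
    rcases j with _ | j''
    · omega
    · have hm : Matched (true :: (x ++ [false])) (i+1) (j''+1) := h
      have hm' := matched_cons_iff.mp hm
      have hm'' := (matched_append_left_iff (by omega : j'' < x.length)).mp hm'
      simpa using hm''

lemma matched_wrap_shift {x : List Bool} {i j : ℕ} (h : Matched x i j) :
    Matched (true :: x ++ [false]) (i+1) (j+1) := by
  show Matched (true :: (x ++ [false])) (i+1) (j+1)
  rw [matched_cons_iff]
  exact (matched_append_left_iff h.lt_length).mpr h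

end WrapLemmas


section PyrLemmas

lemma count_true_add_count_false (x : List Bool) :
    x.count true + x.count false = x.length := by
  induction x with
  | nil => simp
  | cons a l ih => cases a <;> simp [List.count_cons] <;> omega

lemma slice_append_left {a b : List Bool} {i n : ℕ} (h : i + n ≤ a.length) :
    ((a ++ b).drop i).take n = (a.drop i).take n := by
  rw [List.drop_append_of_le_length (by omega),
    List.take_append_of_le_length (by rw [List.length_drop]; omega)]

lemma pyr_append_left {a b : List Bool} {i j : ℕ} (hj : j < a.length) :
    IsPyramidSec (a ++ b) i j ↔ IsPyramidSec a i j := by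
  unfold IsPyramidSec
  constructor
  · rintro ⟨hab, _, hev, hsec⟩
    exact ⟨hab, hj, hev, by rwa [slice_append_left (by omega)] at hsec⟩
  · rintro ⟨hab, _, hev, hsec⟩
    exact ⟨hab, by rw [List.length_append]; omega, hev,
      by rwa [slice_append_left (by omega)]⟩

lemma pyr_append_right {a b : List Bool} {i j : ℕ} :
    IsPyramidSec (a ++ b) (a.length + i) (a.length + j) ↔ IsPyramidSec b i j := by
  unfold IsPyramidSec
  rw [List.drop_length_add_append, show a.length + j - (a.length + i) = j - i by omega,
    List.length_append]
  constructor
  · rintro ⟨hab, hlen, hev, hsec⟩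
    exact ⟨by omega, by omega, hev, hsec⟩
  · rintro ⟨hab, hlen, hev, hsec⟩
    exact ⟨by omega, by omega, hev, hsec⟩

lemma pyr_cons_iff {c : Bool} {r : List Bool} {i j : ℕ} :
    IsPyramidSec (c :: r) (i+1) (j+1) ↔ IsPyramidSec r i j := by
  have h := pyr_append_right (a := [c]) (b := r) (i := i) (j := j)
  simpa [Nat.add_comm] using h

lemma pyr_wrap {x : List Bool} (hx : Bal x) :
    IsPyramidSec (true :: x ++ [false]) 0 (x.length + 1) ↔
      ∃ s, x = List.replicate s true ++ List.replicate s false := by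
  have hlen : (true :: x ++ [false]).length = x.length + 2 := by simp
  have heven : x.count true + x.count false = x.length := count_true_add_count_false x
  have hxe : x.length = 2 * x.count true := by have := hx.1; omega
  unfold IsPyramidSec
  rw [List.drop_zero, show x.length + 1 - 0 + 1 = x.length + 2 by omega,
    List.take_of_length_le (by omega),
    show (x.length + 2) / 2 = x.count true + 1 by omega]
  constructor
  · rintro ⟨-, -, -, hsec⟩
    refine ⟨x.count true, ?_⟩
    rw [List.replicate_succ, List.replicate_succ'] at hsec
    have hsec' : true :: (x ++ [false]) =
        true :: ((List.replicate (x.count true) true ++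
          List.replicate (x.count true) false) ++ [false]) := by
      simpa [List.append_assoc] using hsec
    have h2 := List.cons_injective.eq_iff.mp hsec'
    exact List.append_cancel_right h2
  · rintro ⟨s, rfl⟩
    have hs : (List.replicate s true ++ List.replicate s false).length = 2 * s := by
      simp; omega
    have hcs : (List.replicate s true ++ List.replicate s false).count true = s := by
      simp [List.count_replicate]
    refine ⟨by omega, by omega, by omega, ?_⟩
    rw [hcs, List.replicate_succ, List.replicate_succ']
    simp [List.append_assoc]

lemma hsum_pyr_pos {s k : ℕ} (h1 : 0 < k) (h2 : k < 2 * s) :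
    0 < hsum (List.replicate s true ++ List.replicate s false) k := by
  unfold hsum
  rcases le_or_gt k s with h | h
  · rw [List.take_append_of_le_length (by simp; omega), List.take_replicate]
    simp [List.count_replicate]
    omega
  · rw [show k = s + (k - s) by omega, List.take_add, List.take_left',
      List.drop_left', List.take_replicate]
    · simp [List.count_replicate, List.count_append]
      omega
    · simp
    · simp

end PyrLemmas


section UpStepsLemmas

lemma card_filter_range_add (P : ℕ → Prop) [DecidablePred P] (m n : ℕ) :
    ((Finset.range (m+n)).filter P).card =
      ((Finset.range m).filter P).card +
      ((Finset.range n).filter (fun k => P (m+k))).card := by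
  rw [Finset.range_add, Finset.filter_union, Finset.card_union_of_disjoint, Finset.filter_map,
    Finset.card_map]
  · congr 1
  · rw [Finset.disjoint_left]
    intro z hz hz'
    rw [Finset.mem_filter, Finset.mem_range] at hz
    rw [Finset.mem_filter, Finset.mem_map] at hz'
    obtain ⟨⟨w, hw, hww⟩, -⟩ := hz'
    simp only [addLeftEmbedding_apply] at hww
    omega

lemma stepHeight_append_left {a b : List Bool} {i : ℕ} (h : i < a.length) :
    stepHeight (a ++ b) i = stepHeight a i := by
  unfold stepHeight
  rw [List.take_append_of_le_length (by omega)]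

lemma stepHeight_append_right {a b : List Bool} (ha : a.count true = a.count false)
    (k : ℕ) : stepHeight (a ++ b) (a.length + k) = stepHeight b k := by
  unfold stepHeight
  rw [show a.length + k + 1 = a.length + (k+1) by omega, List.take_add,
    List.take_left', List.drop_left', List.count_append, List.count_append]
  · omega
  · rfl
  · rfl

lemma upSteps_append {a b : List Bool} (ha : Bal a) (h : ℕ) :
    upStepsAtHeight h (a ++ b) = upStepsAtHeight h a + upStepsAtHeight h b := by
  unfold upStepsAtHeight
  rw [List.length_append, card_filter_range_add]
  congr 1
  · refine congrArg Finset.card (Finset.filter_congr ?_)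
    intro i hi
    rw [Finset.mem_range] at hi
    rw [List.getD_append a b false i hi, stepHeight_append_left hi]
  · refine congrArg Finset.card (Finset.filter_congr ?_)
    intro k hk
    rw [Finset.mem_range] at hk
    rw [List.getD_append_right a b false (a.length + k) (by omega),
      show a.length + k - a.length = k by omega, stepHeight_append_right ha.1]

lemma stepHeight_pos {p : List Bool}
    (hp : ∀ k, (p.take k).count false ≤ (p.take k).count true)
    {i : ℕ} (h : i < p.length) (ht : p.getD i false = true) : 1 ≤ stepHeight p i := by
  unfold stepHeight
  have h1 := hp i
  rw [take_succ_of_lt h false, ht]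
  simp [List.count_append]
  omega

lemma upSteps_zero {p : List Bool} (hp : Bal p) : upStepsAtHeight 0 p = 0 := by
  unfold upStepsAtHeight
  rw [Finset.card_eq_zero, Finset.filter_eq_empty_iff]
  intro i hi
  rw [Finset.mem_range] at hi
  rintro ⟨ht, hs⟩
  have := stepHeight_pos hp.2 hi ht
  omega

lemma stepHeight_wrap {x : List Bool} (hx : Bal x) {k : ℕ} (hk : k < x.length) :
    stepHeight (true :: x ++ [false]) (1 + k) = stepHeight x k + 1 := by
  unfold stepHeight
  rw [show (true :: x) ++ [false] = true :: (x ++ [false]) by rfl,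
    show 1 + k + 1 = (k + 1) + 1 by omega, List.take_succ_cons,
    List.take_append_of_le_length (by omega)]
  simp [List.count_cons]
  have := hx.2 (k+1)
  omega

lemma stepHeight_wrap_zero (x : List Bool) :
    stepHeight (true :: x ++ [false]) 0 = 1 := by
  unfold stepHeight
  rw [show (true :: x) ++ [false] = true :: (x ++ [false]) by rfl]
  simp

lemma upSteps_wrap {x : List Bool} (hx : Bal x) {h : ℕ} (hh : 1 ≤ h) :
    upStepsAtHeight h (true :: x ++ [false]) =
      (if h = 1 then 1 else 0) + upStepsAtHeight (h-1) x := by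
  unfold upStepsAtHeight
  rw [show (true :: x ++ [false]).length = 1 + (x.length + 1) by simp; omega,
    card_filter_range_add]
  congr 1
  · rw [Finset.range_one]
    by_cases h1 : h = 1
    · subst h1
      have hp0 : (true :: x ++ [false]).getD 0 false = true ∧
          stepHeight (true :: x ++ [false]) 0 = 1 := ⟨rfl, stepHeight_wrap_zero x⟩
      rw [Finset.filter_singleton, if_pos hp0, Finset.card_singleton, if_pos rfl]
    · have hp0 : ¬ ((true :: x ++ [false]).getD 0 false = true ∧
          stepHeight (true :: x ++ [false]) 0 = h) := by
        rintro ⟨-, hs⟩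
        rw [stepHeight_wrap_zero x] at hs
        omega
      rw [Finset.filter_singleton, if_neg hp0, Finset.card_empty, if_neg h1]
  · rw [card_filter_range_add]
    have hlast : ¬ ((true :: x ++ [false]).getD (1 + (x.length + 0)) false = true ∧
        stepHeight (true :: x ++ [false]) (1 + (x.length + 0)) = h) := by
      rintro ⟨hg, -⟩
      rw [show (true :: x) ++ [false] = true :: (x ++ [false]) by rfl] at hg
      rw [show 1 + (x.length + 0) = x.length + 1 by omega, List.getD_cons_succ,
        List.getD_append_right x [false] false x.length le_rfl] at hg
      simp at hg
    rw [show ((Finset.range 1).filter (fun k =>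
        (true :: x ++ [false]).getD (1 + (x.length + k)) false = true ∧
        stepHeight (true :: x ++ [false]) (1 + (x.length + k)) = h)).card = 0 from ?_]
    · rw [Nat.add_zero]
      refine congrArg Finset.card (Finset.filter_congr ?_)
      intro k hk
      rw [Finset.mem_range] at hk
      have hg : (true :: x ++ [false]).getD (1 + k) false = x.getD k false := by
        rw [show (true :: x) ++ [false] = true :: (x ++ [false]) by rfl,
          show 1 + k = k + 1 by omega, List.getD_cons_succ,
          List.getD_append x [false] false k hk]
      rw [hg, stepHeight_wrap hx hk]
      constructor
      · rintro ⟨h1, h2⟩; exact ⟨h1, by omega⟩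
      · rintro ⟨h1, h2⟩; exact ⟨h1, by omega⟩
    · rw [Finset.card_eq_zero, Finset.range_one, Finset.filter_singleton, if_neg hlast]

end UpStepsLemmas


section ExtPairsLemmas

open scoped Classical

lemma exteriorPair_lt {p : List Bool} {i j : ℕ} (h : ExteriorPair p i j) :
    i < p.length ∧ j < p.length := ⟨lt_trans h.1.1 h.1.2.1, h.1.2.1⟩

lemma extPairs_eq (p : List Bool) {n : ℕ} (hn : p.length ≤ n) :
    exteriorPairs p =
      ((Finset.range n ×ˢ Finset.range n).filter
        (fun q : ℕ × ℕ => ExteriorPair p q.1 q.2)).card := by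
  unfold exteriorPairs
  congr 1
  ext q
  simp only [Finset.mem_filter, Finset.mem_product, Finset.mem_range]
  constructor
  · rintro ⟨⟨h1, h2⟩, h3⟩
    exact ⟨⟨by omega, by omega⟩, h3⟩
  · rintro ⟨-, h3⟩
    have := exteriorPair_lt h3
    exact ⟨⟨by omega, by omega⟩, h3⟩

lemma shift_injective (m : ℕ) :
    Function.Injective (fun q : ℕ × ℕ => (q.1 + m, q.2 + m)) := by
  intro q q' h
  simp only [Prod.mk.injEq] at h
  ext <;> omega

lemma extPairs_append {a b : List Bool} (ha : Bal a) (hb : Bal b) :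
    exteriorPairs (a ++ b) = exteriorPairs a + exteriorPairs b := by
  set n := (a ++ b).length with hn
  have hlen : n = a.length + b.length := by rw [hn, List.length_append]
  have hset : ((Finset.range n ×ˢ Finset.range n).filter
      (fun q : ℕ × ℕ => ExteriorPair (a ++ b) q.1 q.2)) =
      ((Finset.range n ×ˢ Finset.range n).filter
        (fun q : ℕ × ℕ => ExteriorPair a q.1 q.2)) ∪
      (((Finset.range b.length ×ˢ Finset.range b.length).filter
        (fun q : ℕ × ℕ => ExteriorPair b q.1 q.2)).image
          (fun q : ℕ × ℕ => (q.1 + a.length, q.2 + a.length))) := by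
    ext q
    simp only [Finset.mem_union, Finset.mem_filter, Finset.mem_product,
      Finset.mem_range, Finset.mem_image]
    constructor
    · rintro ⟨⟨hq1, hq2⟩, hm, hpyr⟩
      rcases lt_or_ge q.1 a.length with h1 | h1
      · have hj := matched_no_cross ha hm h1
        left
        exact ⟨⟨hq1, hq2⟩, (matched_append_left_iff hj).mp hm,
          fun hp => hpyr ((pyr_append_left hj).mpr hp)⟩
      · right
        have h2 : a.length ≤ q.2 := by
          have := hm.lt
          omega
        obtain ⟨i', hi'⟩ : ∃ i', q.1 = a.length + i' := ⟨q.1 - a.length, by omega⟩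
        obtain ⟨j', hj'⟩ : ∃ j', q.2 = a.length + j' := ⟨q.2 - a.length, by omega⟩
        rw [hi', hj'] at hm hpyr
        have hmb := matched_append_right_iff.mp hm
        have l1 := hmb.lt
        have l2 := hmb.lt_length
        refine ⟨(i', j'), ⟨⟨by omega, l2⟩,
            hmb, fun hp => hpyr (pyr_append_right.mpr hp)⟩, ?_⟩
        exact Prod.ext (show i' + a.length = q.1 by omega)
          (show j' + a.length = q.2 by omega)
    · rintro (⟨⟨hq1, hq2⟩, hm, hpyr⟩ | ⟨q', ⟨⟨hb1, hb2⟩, hm, hpyr⟩, hq⟩)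
      · have hj := hm.lt_length
        exact ⟨⟨hq1, hq2⟩, (matched_append_left_iff hj).mpr hm,
          fun hp => hpyr ((pyr_append_left hj).mp hp)⟩
      · subst hq
        simp only
        refine ⟨⟨by omega, by omega⟩, ?_, ?_⟩
        · rw [show q'.1 + a.length = a.length + q'.1 by omega,
            show q'.2 + a.length = a.length + q'.2 by omega]
          exact matched_append_right_iff.mpr hm
        · rw [show q'.1 + a.length = a.length + q'.1 by omega,
            show q'.2 + a.length = a.length + q'.2 by omega]
          exact fun hp => hpyr (pyr_append_right.mp hp)
  rw [extPairs_eq (a ++ b) le_rfl, hset, Finset.card_union_of_disjoint,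
    Finset.card_image_of_injective _ (shift_injective a.length),
    ← extPairs_eq a (by omega), ← extPairs_eq b le_rfl]
  rw [Finset.disjoint_left]
  rintro q hql hqr
  rw [Finset.mem_filter] at hql
  have hlt := (exteriorPair_lt hql.2).1
  rw [Finset.mem_image] at hqr
  obtain ⟨q', -, hq⟩ := hqr
  have : q.1 = q'.1 + a.length := by rw [← hq]
  omega

lemma extPairs_wrap {x : List Bool} (hx : Bal x) :
    exteriorPairs (true :: x ++ [false]) =
      (if ∃ s, x = List.replicate s true ++ List.replicate s false then 0 else 1) +
        exteriorPairs x := by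
  set w := true :: x ++ [false] with hw
  have hwl : w.length = x.length + 2 := by simp [hw]
  have hshiftpyr : ∀ i j : ℕ, j < x.length →
      (IsPyramidSec w (i+1) (j+1) ↔ IsPyramidSec x i j) := by
    intro i j hj
    rw [hw, List.cons_append, pyr_cons_iff, pyr_append_left hj]
  have hset : ((Finset.range w.length ×ˢ Finset.range w.length).filter
      (fun q : ℕ × ℕ => ExteriorPair w q.1 q.2)) =
      ((if ∃ s, x = List.replicate s true ++ List.replicate s false then (∅ : Finset (ℕ × ℕ))
        else {((0 : ℕ), x.length + 1)})) ∪
      (((Finset.range x.length ×ˢ Finset.range x.length).filter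
        (fun q : ℕ × ℕ => ExteriorPair x q.1 q.2)).image
          (fun q : ℕ × ℕ => (q.1 + 1, q.2 + 1))) := by
    ext q
    simp only [Finset.mem_union, Finset.mem_filter, Finset.mem_product,
      Finset.mem_range, Finset.mem_image]
    constructor
    · rintro ⟨⟨hq1, hq2⟩, hm, hpyr⟩
      rcases matched_wrap_cases hx hm with ⟨h1, h2⟩ | ⟨h1, h2, h3, hmx⟩
      · left
        have hnp : ¬ ∃ s, x = List.replicate s true ++ List.replicate s false := by
          intro hs
          exact hpyr (by rw [hw, h1, h2]; exact (pyr_wrap hx).mpr hs)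
        rw [if_neg hnp, Finset.mem_singleton]
        exact Prod.ext h1 h2
      · right
        have hmlt := hmx.lt
        have hmll := hmx.lt_length
        refine ⟨(q.1 - 1, q.2 - 1), ⟨⟨by omega, by omega⟩, hmx, ?_⟩, ?_⟩
        · intro hp
          have := (hshiftpyr (q.1 - 1) (q.2 - 1) (by omega)).mpr hp
          rw [show q.1 - 1 + 1 = q.1 by omega, show q.2 - 1 + 1 = q.2 by omega] at this
          exact hpyr this
        · exact Prod.ext (show q.1 - 1 + 1 = q.1 by omega)
            (show q.2 - 1 + 1 = q.2 by omega)
    · rintro (hq | ⟨q', ⟨⟨hb1, hb2⟩, hm, hpyr⟩, hq⟩)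
      · by_cases hC : ∃ s, x = List.replicate s true ++ List.replicate s false
        · rw [if_pos hC] at hq
          exact absurd hq (Finset.notMem_empty q)
        · rw [if_neg hC, Finset.mem_singleton] at hq
          subst hq
          refine ⟨⟨by omega, by omega⟩, matched_wrap hx, ?_⟩
          intro hp
          exact hC ((pyr_wrap hx).mp hp)
      · subst hq
        have hmlt := hm.lt
        have hmll := hm.lt_length
        refine ⟨⟨by omega, by omega⟩, matched_wrap_shift hm, ?_⟩
        intro hp
        exact hpyr ((hshiftpyr q'.1 q'.2 hmll).mp hp)
  rw [extPairs_eq w le_rfl, hset, Finset.card_union_of_disjoint,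
    Finset.card_image_of_injective _ (shift_injective 1),
    ← extPairs_eq x le_rfl]
  · congr 1
    by_cases hC : ∃ s, x = List.replicate s true ++ List.replicate s false
    · rw [if_pos hC, if_pos hC, Finset.card_empty]
    · rw [if_neg hC, if_neg hC, Finset.card_singleton]
  · rw [Finset.disjoint_left]
    rintro q hql hqr
    rw [Finset.mem_image] at hqr
    obtain ⟨q', -, hq⟩ := hqr
    by_cases hC : ∃ s, x = List.replicate s true ++ List.replicate s false
    · rw [if_pos hC] at hql
      exact absurd hql (Finset.notMem_empty q)
    · rw [if_neg hC, Finset.mem_singleton] at hql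
      subst hql
      have := congrArg Prod.fst hq
      simp only at this
      omega

end ExtPairsLemmas


namespace OTree

lemma toPath_node (ts : List OTree) :
    (node ts).toPath = (ts.map (fun c => true :: (c.toPath ++ [false]))).flatten := by
  rw [toPath]
  congr 1
  exact List.attach_map_val (l := ts) (f := fun c => true :: (c.toPath ++ [false]))

lemma toPath_nil : (node []).toPath = [] := by
  rw [toPath_node]; rfl

lemma toPath_cons (c : OTree) (ts : List OTree) :
    (node (c :: ts)).toPath = (true :: c.toPath ++ [false]) ++ (node ts).toPath := by
  rw [toPath_node, List.map_cons, List.flatten_cons, toPath_node]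
  rfl

lemma numEdges_node (ts : List OTree) :
    (node ts).numEdges = (ts.map (fun c => c.numEdges + 1)).sum := by
  rw [numEdges]
  congr 1
  exact List.attach_map_val (l := ts) (f := fun c => c.numEdges + 1)

lemma numEdges_cons (c : OTree) (ts : List OTree) :
    (node (c :: ts)).numEdges = (c.numEdges + 1) + (node ts).numEdges := by
  rw [numEdges_node, List.map_cons, List.sum_cons, numEdges_node]

lemma numLeaves_nil : (node []).numLeaves = 1 := by rw [numLeaves]

lemma numLeaves_cons (c : OTree) (ts : List OTree) :
    (node (c :: ts)).numLeaves = c.numLeaves + (ts.map numLeaves).sum := by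
  rw [numLeaves]
  rw [show ((c :: ts).attach.map (fun x => numLeaves x.1)) =
    (c :: ts).map numLeaves from List.attach_map_val]
  rw [List.map_cons, List.sum_cons]

theorem numLeaves_pos : ∀ (t : OTree), 1 ≤ t.numLeaves
  | .node [] => by rw [numLeaves_nil]
  | .node (c :: ts) => by
    rw [numLeaves_cons]
    have := numLeaves_pos c
    omega
  termination_by t => sizeOf t
  decreasing_by
    simp_wf
    omega

lemma extEdges_node (ts : List OTree) :
    (node ts).extEdges =
      (ts.map (fun c => (if 2 ≤ c.numLeaves then 1 else 0) + c.extEdges)).sum := by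
  rw [extEdges]
  congr 1
  exact List.attach_map_val (l := ts) (f := fun c => (if 2 ≤ c.numLeaves then 1 else 0) + c.extEdges)

lemma extEdges_cons (c : OTree) (ts : List OTree) :
    (node (c :: ts)).extEdges =
      ((if 2 ≤ c.numLeaves then 1 else 0) + c.extEdges) + (node ts).extEdges := by
  rw [extEdges_node, List.map_cons, List.sum_cons, extEdges_node]

lemma edgesAtLevelFrom_node (ts : List OTree) (cur h : ℕ) :
    (node ts).edgesAtLevelFrom cur h =
      (ts.map (fun c => (if cur + 1 = h then 1 else 0) +
        c.edgesAtLevelFrom (cur + 1) h)).sum := by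
  rw [edgesAtLevelFrom]
  congr 1
  exact List.attach_map_val (l := ts) (f := fun c => (if cur + 1 = h then 1 else 0) + c.edgesAtLevelFrom (cur + 1) h)

theorem edgesAtLevelFrom_shift : ∀ (t : OTree) (cur h : ℕ),
    t.edgesAtLevelFrom (cur + 1) (h + 1) = t.edgesAtLevelFrom cur h
  | .node ts, cur, h => by
    rw [edgesAtLevelFrom_node, edgesAtLevelFrom_node]
    congr 1
    refine List.map_congr_left fun c hc => ?_
    have hrec := edgesAtLevelFrom_shift c (cur + 1) h
    have hif : (if cur + 1 + 1 = h + 1 then (1:ℕ) else 0) =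
        (if cur + 1 = h then 1 else 0) := by
      by_cases hh : cur + 1 = h
      · rw [if_pos (by omega), if_pos hh]
      · rw [if_neg (by omega), if_neg hh]
    rw [hif, hrec]
  termination_by t => sizeOf t
  decreasing_by
    simp_wf
    have := List.sizeOf_lt_of_mem hc
    omega

theorem edgesAtLevelFrom_zero : ∀ (t : OTree) (cur h : ℕ), h ≤ cur →
    t.edgesAtLevelFrom cur h = 0
  | .node ts, cur, h, hle => by
    rw [edgesAtLevelFrom_node]
    apply List.sum_eq_zero
    intro v hv
    rw [List.mem_map] at hv
    obtain ⟨c, hc, rfl⟩ := hv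
    rw [if_neg (by omega), edgesAtLevelFrom_zero c (cur + 1) h (by omega)]
    simp
  termination_by t => sizeOf t
  decreasing_by
    simp_wf
    have := List.sizeOf_lt_of_mem hc
    omega

end OTree


open scoped Classical in
theorem main_inv : ∀ (t : OTree),
    t.toPath.length = 2 * t.numEdges ∧ Bal t.toPath ∧
    (∀ h, upStepsAtHeight h t.toPath = t.edgesAtLevel h) ∧
    exteriorPairs t.toPath = t.extEdges ∧
    ((∃ s, t.toPath = List.replicate s true ++ List.replicate s false) ↔
      t.numLeaves = 1)
  | .node [] => by
    rw [OTree.toPath_nil]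
    refine ⟨by rw [OTree.numEdges_node]; rfl, bal_nil, ?_, ?_, ?_⟩
    · intro h
      rw [show upStepsAtHeight h [] = 0 by simp [upStepsAtHeight],
        OTree.edgesAtLevel, OTree.edgesAtLevelFrom_node]
      rfl
    · rw [show exteriorPairs [] = 0 by simp [exteriorPairs], OTree.extEdges_node]
      rfl
    · constructor
      · intro _; rw [OTree.numLeaves_nil]
      · intro _; exact ⟨0, by simp⟩
  | .node (c :: ts) => by
    obtain ⟨ih1, ihb, ih3, ih4, ih5⟩ := main_inv c
    obtain ⟨jh1, jhb, jh3, jh4, jh5⟩ := main_inv (.node ts)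
    set x := c.toPath with hx_def
    set y := (OTree.node ts).toPath with hy_def
    have hp : (OTree.node (c :: ts)).toPath = (true :: x ++ [false]) ++ y :=
      OTree.toPath_cons c ts
    have hwbal : Bal (true :: x ++ [false]) := bal_wrap ihb
    have hpbal : Bal ((true :: x ++ [false]) ++ y) := bal_append hwbal jhb
    have hwlen : (true :: x ++ [false]).length = x.length + 2 := by simp
    refine ⟨?_, ?_, ?_, ?_, ?_⟩
    · rw [hp, OTree.numEdges_cons, List.length_append, hwlen]
      omega
    · rw [hp]; exact hpbal
    · intro h
      rw [OTree.edgesAtLevel, OTree.edgesAtLevelFrom_node, List.map_cons,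
        List.sum_cons]
      have htail : (ts.map (fun u => (if 0 + 1 = h then 1 else 0) +
          u.edgesAtLevelFrom (0 + 1) h)).sum =
          (OTree.node ts).edgesAtLevelFrom 0 h := by
        rw [OTree.edgesAtLevelFrom_node]
      rw [htail]
      rcases h with _ | h'
      · rw [hp, upSteps_zero hpbal, if_neg (by omega),
          OTree.edgesAtLevelFrom_zero c 1 0 (by omega),
          OTree.edgesAtLevelFrom_zero _ 0 0 (by omega)]
      · rw [hp, upSteps_append hwbal, upSteps_wrap ihb (by omega)]
        have e1 : upStepsAtHeight (h' + 1 - 1) x = c.edgesAtLevelFrom 1 (h' + 1) := by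
          rw [show h' + 1 - 1 = h' by omega, ih3 h', OTree.edgesAtLevel]
          exact (OTree.edgesAtLevelFrom_shift c 0 h').symm
        have e2 : upStepsAtHeight (h' + 1) y =
            (OTree.node ts).edgesAtLevelFrom 0 (h' + 1) := jh3 (h' + 1)
        rw [e1, e2]
        have hif : (if h' + 1 = 1 then (1:ℕ) else 0) =
            (if 0 + 1 = h' + 1 then 1 else 0) := by
          by_cases hh : h' = 0
          · subst hh; rfl
          · rw [if_neg (by omega), if_neg (by omega)]
        rw [hif]
    · rw [hp, extPairs_append hwbal jhb, extPairs_wrap ihb, ih4, jh4,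
        OTree.extEdges_cons]
      have hpos := OTree.numLeaves_pos c
      have hif : (if ∃ s, x = List.replicate s true ++ List.replicate s false
          then (0:ℕ) else 1) = (if 2 ≤ c.numLeaves then 1 else 0) := by
        by_cases hC : ∃ s, x = List.replicate s true ++ List.replicate s false
        · have := ih5.mp hC
          rw [if_pos hC, if_neg (by omega)]
        · have h1 : c.numLeaves ≠ 1 := fun h1 => hC (ih5.mpr h1)
          rw [if_neg hC, if_pos (by omega)]
      rw [hif]
    · constructor
      · rintro ⟨s, hs⟩
        rw [hp] at hs
        have hzero : hsum ((true :: x ++ [false]) ++ y) (x.length + 2) = 0 := by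
          rw [show x.length + 2 = (true :: x ++ [false]).length from hwlen.symm,
            hsum_append_le le_rfl]
          exact hwbal.full le_rfl
        have hlen2 : x.length + 2 + y.length = 2 * s := by
          have hl := congrArg List.length hs
          rw [List.length_append, hwlen] at hl
          simp at hl
          omega
        have hy : y.length = 0 := by
          by_contra hy0
          have hlt : x.length + 2 < 2 * s := by omega
          have hpos := hsum_pyr_pos (s := s) (k := x.length + 2) (by omega) hlt
          rw [← hs] at hpos
          omega
        have hynil : y = [] := List.length_eq_zero_iff.mp hy
        have hts : ts = [] := by
          cases ts with
          | nil => rfl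
          | cons c' ts' =>
            exfalso
            have hy2 : y = (true :: c'.toPath ++ [false]) ++ (OTree.node ts').toPath :=
              OTree.toPath_cons c' ts'
            rw [hynil] at hy2
            exact (List.cons_ne_nil _ _) hy2.symm
        subst hts
        rw [hynil, List.append_nil] at hs
        rcases s with _ | s'
        · exfalso; simp at hs
        · rw [List.replicate_succ, List.replicate_succ'] at hs
          have hs' : true :: (x ++ [false]) = true :: (List.replicate s' true ++
              (List.replicate s' false ++ [false])) := by
            simpa [List.append_assoc] using hs
          have h2 := List.cons_injective.eq_iff.mp hs'
          have hxp : x = List.replicate s' true ++ List.replicate s' false := by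
            have h3 : x ++ [false] =
                (List.replicate s' true ++ List.replicate s' false) ++ [false] := by
              rw [h2, List.append_assoc]
            exact List.append_cancel_right h3
          have hc1 : c.numLeaves = 1 := ih5.mp ⟨s', hxp⟩
          rw [OTree.numLeaves_cons]
          simp [hc1]
      · intro hL
        rw [OTree.numLeaves_cons] at hL
        have hpos := OTree.numLeaves_pos c
        have hsum0 : (ts.map OTree.numLeaves).sum = 0 := by omega
        have hts : ts = [] := by
          cases ts with
          | nil => rfl
          | cons c' ts' =>
            exfalso
            rw [List.map_cons, List.sum_cons] at hsum0
            have := OTree.numLeaves_pos c'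
            omega
        subst hts
        have hc1 : c.numLeaves = 1 := by
          rw [List.map_nil, List.sum_nil] at hL
          omega
        obtain ⟨s, hxp⟩ := ih5.mpr hc1
        refine ⟨s + 1, ?_⟩
        rw [hp, show y = ([] : List Bool) from OTree.toPath_nil, List.append_nil,
          hxp, List.replicate_succ, List.replicate_succ']
        simp [List.append_assoc]
  termination_by t => sizeOf t
  decreasing_by
    all_goals simp_wf
    all_goals omega

/-- Under the preorder bijection `OTree.toPath` between ordered trees with `n` edges
and Dyck paths of semilength `n`, the number of up steps at height `h` of the path
equals the number of edges at level `h` of the tree, and the number of exterior pairs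
of the path equals the number of exterior edges of the tree. -/
theorem preorder_bijection_statistics (t : OTree) :
    IsDyckPath t.numEdges t.toPath ∧
    (∀ h : ℕ, upStepsAtHeight h t.toPath = t.edgesAtLevel h) ∧
    exteriorPairs t.toPath = t.extEdges := by
  obtain ⟨h1, hbal, h3, h4, -⟩ := main_inv t
  have hc := count_true_add_count_false t.toPath
  exact ⟨⟨h1, by have := hbal.1; omega, fun i => hbal.2 i⟩, h3, h4⟩
end

section
/- For every m ≥ 2 and n ≥ 1, the number of Dyck paths of semilength n of height at most m-2 equals Σ over n of the coefficient of x^n in U_{m-2}(1/(2√x)) / (√x · U_{m-1}(1/(2√x))), where U_k is the k-th Chebyshev polynomial of the second kind; i.e., this quotient of Chebyshev polynomials, regarded as a power series in x, is the generating function for Dyck paths of height at most m-2. -/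
/-- The height of the path `p` is at most `H`: every prefix stays at level `≤ H`. -/
def HeightLE (p : List Bool) (H : ℕ) : Prop :=
  ∀ i, (p.take i).count true ≤ (p.take i).count false + H

/-- `chebQ k` is the polynomial `x^(k/2) · U_k(1/(2√x))`, written out via the
coefficients of the Chebyshev polynomial of the second kind `U_k`:
`chebQ k = Σ_{j ≤ k/2} (coeff of t^(k-2j) in U_k) · 2^(2j-k) · x^j`. -/
noncomputable def chebQ (k : ℕ) : Polynomial ℚ :=
  ∑ j ∈ Finset.range (k / 2 + 1),
    Polynomial.C ((Polynomial.Chebyshev.U ℚ k).coeff (k - 2 * j) * 2 ^ (2 * j) / 2 ^ k) *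
      Polynomial.X ^ j

open Polynomial Polynomial.Chebyshev

lemma chebQ_coeff (k j : ℕ) :
    (chebQ k).coeff j =
      if j ≤ k / 2 then (U ℚ k).coeff (k - 2 * j) * 2 ^ (2 * j) / 2 ^ k else 0 := by
  unfold chebQ
  rw [Polynomial.finset_sum_coeff]
  simp only [Polynomial.coeff_C_mul, Polynomial.coeff_X_pow, mul_ite, mul_one, mul_zero]
  rw [Finset.sum_ite_eq (Finset.range (k / 2 + 1)) j]
  simp [Nat.lt_succ_iff]

lemma U_coeff_rec (k i : ℕ) :
    (U ℚ ((k : ℤ) + 2)).coeff (i + 1) =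
      2 * (U ℚ ((k : ℤ) + 1)).coeff i - (U ℚ k).coeff (i + 1) := by
  rw [U_add_two]
  simp [mul_assoc, Polynomial.coeff_X_mul]

lemma U_coeff_rec0 (k : ℕ) :
    (U ℚ ((k : ℤ) + 2)).coeff 0 = -(U ℚ k).coeff 0 := by
  rw [U_add_two]
  simp [mul_assoc, Polynomial.mul_coeff_zero]

lemma U_coeff_zero : ∀ (k i : ℕ), k < i → (U ℚ (k : ℤ)).coeff i = 0
  | 0, i, h => by
    have hi : i ≠ 0 := by omega
    rw [Nat.cast_zero, U_zero]
    simp [Polynomial.coeff_one, hi]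
  | 1, i, h => by
    have hi : ¬ (1 = i) := by omega
    rw [Nat.cast_one, U_one]
    simp [Polynomial.coeff_ofNat_mul, Polynomial.coeff_X, hi]
  | (k + 2), i, h => by
    obtain ⟨i', rfl⟩ : ∃ i', i = i' + 1 := ⟨i - 1, by omega⟩
    have hcast2 : ((k + 2 : ℕ) : ℤ) = (k : ℤ) + 2 := by push_cast; ring
    have hcast1 : ((k + 1 : ℕ) : ℤ) = (k : ℤ) + 1 := by push_cast; ring
    rw [hcast2, U_coeff_rec k i']
    rw [show (k : ℤ) + 1 = ((k + 1 : ℕ) : ℤ) from by push_cast; ring]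
    rw [U_coeff_zero (k + 1) i' (by omega), U_coeff_zero k (i' + 1) (by omega)]
    ring

lemma chebQ_rec (k : ℕ) : chebQ (k + 2) = chebQ (k + 1) - X * chebQ k := by
  ext j
  rw [Polynomial.coeff_sub, chebQ_coeff, chebQ_coeff]
  have hcast2 : ((k + 2 : ℕ) : ℤ) = (k : ℤ) + 2 := by push_cast; ring
  have hcast1 : ((k + 1 : ℕ) : ℤ) = (k : ℤ) + 1 := by push_cast; ring
  rcases j with _ | j'
  · -- j = 0
    rw [if_pos (Nat.zero_le _), if_pos (Nat.zero_le _), Polynomial.mul_coeff_zero]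
    simp only [Polynomial.coeff_X_zero, zero_mul, sub_zero, mul_zero, Nat.sub_zero, pow_zero, mul_one]
    rw [hcast2, hcast1, show k + 2 = (k + 1) + 1 from rfl, U_coeff_rec k (k + 1)]
    rw [U_coeff_zero k (k + 1 + 1) (by omega)]
    have : (2 : ℚ) ^ (k + 2) = 2 ^ (k + 1) * 2 := by ring
    rw [this]
    have h2 : (2 : ℚ) ^ (k + 1) ≠ 0 := by positivity
    field_simp
    ring
  · -- j = j' + 1
    rw [Polynomial.coeff_X_mul, chebQ_coeff]
    by_cases hj : j' ≤ k / 2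
    · have h2 : j' + 1 ≤ (k + 2) / 2 := by omega
      rw [if_pos h2, if_pos hj]
      by_cases hlt : 2 * j' < k
      · have h1 : j' + 1 ≤ (k + 1) / 2 := by omega
        rw [if_pos h1]
        have e2 : k + 2 - 2 * (j' + 1) = (k - 2 * j' - 1) + 1 := by omega
        have e1 : k + 1 - 2 * (j' + 1) = k - 2 * j' - 1 := by omega
        have e0 : k - 2 * j' = (k - 2 * j' - 1) + 1 := by omega
        rw [e2, e1, hcast2, hcast1, U_coeff_rec k (k - 2 * j' - 1), e0]
        simp only [Nat.add_sub_cancel]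
        have h2k : (2 : ℚ) ^ (k + 2) = 2 ^ k * 4 := by ring
        have h1k : (2 : ℚ) ^ (k + 1) = 2 ^ k * 2 := by ring
        have hj2 : (2 : ℚ) ^ (2 * (j' + 1)) = 2 ^ (2 * j') * 4 := by ring
        rw [h2k, h1k, hj2]
        have : (2 : ℚ) ^ k ≠ 0 := by positivity
        field_simp
        ring
      · -- 2 * j' = k (k even, j' = k/2)
        have hk : 2 * j' = k := by omega
        have h1 : ¬ (j' + 1 ≤ (k + 1) / 2) := by omega
        rw [if_neg h1]
        have e2 : k + 2 - 2 * (j' + 1) = 0 := by omega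
        have e0 : k - 2 * j' = 0 := by omega
        rw [e2, e0, hcast2, U_coeff_rec0 k]
        have hj2 : (2 : ℚ) ^ (2 * (j' + 1)) = 2 ^ (2 * j') * 4 := by ring
        have h2k : (2 : ℚ) ^ (k + 2) = 2 ^ k * 4 := by ring
        rw [hj2, h2k]
        have : (2 : ℚ) ^ k ≠ 0 := by positivity
        field_simp
        ring
    · have h2 : ¬ (j' + 1 ≤ (k + 2) / 2) := by omega
      have h1 : ¬ (j' + 1 ≤ (k + 1) / 2) := by omega
      rw [if_neg h2, if_neg h1, if_neg hj, sub_zero]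

lemma count_tf (p : List Bool) : p.count true + p.count false = p.length := by
  induction p with
  | nil => simp
  | cons a l ih =>
    cases a <;> simp [List.count_cons] <;> omega

lemma dyck_prefix {n : ℕ} {p : List Bool} (h : IsDyckPath n p) {s : List Bool}
    (hs : s <+: p) : s.count false ≤ s.count true := by
  rw [List.prefix_iff_eq_take.mp hs]
  exact h.2.2 s.length

lemma height_prefix {H : ℕ} {p : List Bool} (h : HeightLE p H) {s : List Bool}
    (hs : s <+: p) : s.count true ≤ s.count false + H := by
  rw [List.prefix_iff_eq_take.mp hs]
  exact h s.length

lemma dyck_counts {n : ℕ} {p : List Bool} (h : IsDyckPath n p) :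
    p.count true = n ∧ p.count false = n := by
  have := count_tf p
  have h1 := h.1
  have h2 := h.2.1
  omega

lemma prefix_append_cases {α : Type*} {s q t : List α} (h : s <+: q ++ t) :
    s <+: q ∨ ∃ s', s = q ++ s' ∧ s' <+: t := by
  rcases le_or_gt s.length q.length with hl | hl
  · exact Or.inl (List.prefix_of_prefix_length_le h (q.prefix_append t) hl)
  · right
    obtain ⟨s', rfl⟩ := List.prefix_of_prefix_length_le (q.prefix_append t) h hl.le
    exact ⟨s', rfl, (List.prefix_append_right_inj q).mp h⟩

lemma prefix_cases {α : Type*} {s q r : List α} {a b : α}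
    (hs : s <+: a :: (q ++ b :: r)) :
    s = [] ∨ (∃ s', s = a :: s' ∧ s' <+: q) ∨
      (∃ s'', s = a :: (q ++ b :: s'') ∧ s'' <+: r) := by
  cases s with
  | nil => exact Or.inl rfl
  | cons c s0 =>
    right
    rw [List.cons_prefix_cons] at hs
    obtain ⟨rfl, hs0⟩ := hs
    rcases prefix_append_cases hs0 with h | ⟨s1, rfl, h1⟩
    · exact Or.inl ⟨s0, rfl, h⟩
    · cases s1 with
      | nil => exact Or.inl ⟨q, by simp, List.prefix_refl q⟩
      | cons d s2 =>
        rw [List.cons_prefix_cons] at h1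
        obtain ⟨rfl, h2⟩ := h1
        exact Or.inr ⟨s2, rfl, h2⟩

lemma compose_mem {H i j : ℕ} {q r : List Bool}
    (hq : IsDyckPath i q) (hqH : HeightLE q H)
    (hr : IsDyckPath j r) (hrH : HeightLE r (H + 1)) :
    IsDyckPath (i + j + 1) (true :: (q ++ false :: r)) ∧
      HeightLE (true :: (q ++ false :: r)) (H + 1) := by
  have hqc := dyck_counts hq
  have hrc := dyck_counts hr
  have hql := hq.1
  have hrl := hr.1
  refine ⟨⟨?_, ?_, ?_⟩, ?_⟩
  · simp only [List.length_cons, List.length_append]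
    omega
  · simp only [List.count_cons, List.count_append]
    simp
    omega
  · intro k
    have hs := List.take_prefix k (true :: (q ++ false :: r))
    set s := (true :: (q ++ false :: r)).take k with hsdef
    clear_value s
    rcases prefix_cases hs with rfl | ⟨s', rfl, h'⟩ | ⟨s'', rfl, h''⟩
    · simp
    · have := dyck_prefix hq h'
      simp only [List.count_cons]
      simp
      omega
    · have := dyck_prefix hr h''
      simp only [List.count_cons, List.count_append]
      simp
      omega
  · intro k
    have hs := List.take_prefix k (true :: (q ++ false :: r))
    set s := (true :: (q ++ false :: r)).take k with hsdef
    clear_value s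
    rcases prefix_cases hs with rfl | ⟨s', rfl, h'⟩ | ⟨s'', rfl, h''⟩
    · simp
    · have := height_prefix hqH h'
      simp only [List.count_cons, List.count_append]
      simp
      omega
    · have := height_prefix hrH h''
      simp only [List.count_cons, List.count_append]
      simp
      omega

lemma dyck_decomp {n H : ℕ} {p : List Bool} (hp : IsDyckPath (n + 1) p)
    (hH : HeightLE p (H + 1)) :
    ∃ i j q r, i + j = n ∧ p = true :: (q ++ false :: r) ∧
      IsDyckPath i q ∧ HeightLE q H ∧ IsDyckPath j r ∧ HeightLE r (H + 1) := by
  classical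
  have hlen : p.length = 2 * (n + 1) := hp.1
  have hbal := dyck_counts hp
  have hex : ∃ k, 0 < k ∧ (p.take k).count true = (p.take k).count false := by
    refine ⟨2 * (n + 1), by omega, ?_⟩
    rw [← hlen, List.take_length]
    omega
  obtain ⟨k, hk, hmink⟩ : ∃ k, (0 < k ∧ (p.take k).count true = (p.take k).count false) ∧
      ∀ m, m < k → ¬(0 < m ∧ (p.take m).count true = (p.take m).count false) :=
    ⟨Nat.find hex, Nat.find_spec hex, fun m hm => Nat.find_min hex hm⟩
  have hkle : k ≤ 2 * (n + 1) := by
    by_contra hcon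
    exact hmink (2 * (n + 1)) (by omega) ⟨by omega, by rw [← hlen, List.take_length]; omega⟩
  -- p starts with true
  obtain ⟨b, rest, rfl⟩ : ∃ b rest, p = b :: rest := by
    cases p with
    | nil => simp at hlen
    | cons b rest => exact ⟨b, rest, rfl⟩
  have hb : b = true := by
    have h1 := hp.2.2 1
    cases b
    · simp at h1
    · rfl
  subst hb
  have hk2 : 2 ≤ k := by
    rcases k with _ | _ | k
    · exact absurd hk.1 (by omega)
    · exfalso; have := hk.2; simp at this
    · omega
  -- element at position k-1
  have hk1len : k - 1 < (true :: rest).length := by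
    simp only [List.length_cons] at hlen ⊢
    omega
  have htake : (true :: rest).take k = (true :: rest).take (k - 1) ++ [(true :: rest)[k-1]] := by
    conv_lhs => rw [show k = (k - 1) + 1 by omega]
    rw [List.take_succ, List.getElem?_eq_getElem hk1len]
    rfl
  have hmin : ¬ ((true :: rest).take (k-1)).count true = ((true :: rest).take (k-1)).count false := by
    have := hmink (k - 1) (by omega)
    push_neg at this
    exact this (by omega)
  have hdy := hp.2.2 (k - 1)
  have hc : (true :: rest)[k-1] = false := by
    rcases h : (true :: rest)[k-1] with _ | _
    · rfl
    · exfalso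
      rw [h] at htake
      have hbalk := hk.2
      rw [htake] at hbalk
      simp [List.count_append] at hbalk
      omega
  rw [hc] at htake
  -- s = take (k-1) = true :: q
  have hsq : (true :: rest).take (k - 1) = true :: rest.take (k - 2) := by
    conv_lhs => rw [show k - 1 = (k - 2) + 1 by omega]
    rw [List.take_succ_cons]
  set q := rest.take (k - 2) with hqdef
  set r := (true :: rest).drop k with hrdef
  have hpeq : true :: rest = true :: (q ++ false :: r) := by
    conv_lhs => rw [← List.take_append_drop k (true :: rest)]
    rw [htake, hsq]
    simp
    exact hrdef.symm
  -- balance of q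
  have hbalk := hk.2
  rw [htake, hsq] at hbalk
  simp [List.count_append] at hbalk
  -- counts in take (k-1)
  rw [hsq] at hdy hmin
  simp at hdy hmin
  have hqbal : q.count true = q.count false := by omega
  have hqlen : q.length = k - 2 := by
    rw [hqdef, List.length_take]
    simp only [List.length_cons] at hlen
    omega
  set i := q.count true with hidef
  have hilen : q.length = 2 * i := by
    have := count_tf q
    omega
  -- q is a Dyck path of height ≤ H
  have hqpre : ∀ s', s' <+: q → true :: s' <+: true :: rest := by
    intro s' h'
    rw [hpeq, List.cons_prefix_cons]
    exact ⟨rfl, h'.trans (q.prefix_append _)⟩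
  have hqdyck : IsDyckPath i q := by
    refine ⟨hilen, rfl, ?_⟩
    intro l
    have h' := List.take_prefix l q
    set s' := q.take l
    clear_value s'
    by_contra hcon
    push_neg at hcon
    have hpr := hqpre s' h'
    have h1 := dyck_prefix hp hpr
    simp at h1
    have hpr' : true :: s' = (true :: rest).take (s'.length + 1) := by
      have := List.prefix_iff_eq_take.mp hpr
      simpa using this
    have hbal' : ((true :: rest).take (s'.length + 1)).count true
        = ((true :: rest).take (s'.length + 1)).count false := by
      rw [← hpr']
      simp
      omega
    have hlt : s'.length + 1 < k := by
      have := h'.length_le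
      omega
    have := hmink (s'.length + 1) hlt
    push_neg at this
    exact absurd hbal' (this (by omega))
  have hqH : HeightLE q H := by
    intro l
    have h' := List.take_prefix l q
    set s' := q.take l
    clear_value s'
    have h1 := height_prefix hH (hqpre s' h')
    simp at h1
    omega
  -- r is a Dyck path of height ≤ H+1
  have hrpre : ∀ s'', s'' <+: r → true :: (q ++ false :: s'') <+: true :: rest := by
    intro s'' h''
    rw [hpeq, List.cons_prefix_cons]
    refine ⟨rfl, ?_⟩
    rw [List.prefix_append_right_inj, List.cons_prefix_cons]
    exact ⟨rfl, h''⟩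
  set jj := r.count true with hjdef
  have hrlen : r.length = 2 * jj := by
    have hl : r.length = 2 * (n + 1) - k := by
      rw [hrdef, List.length_drop, hlen]
    have hcnt : (true :: rest).count true = 1 + q.count true + r.count true := by
      conv_lhs => rw [hpeq]
      simp [List.count_append, List.count_cons]
      omega
    have hc2 := hp.2.1
    have := count_tf r
    simp only [List.length_cons] at hlen
    omega
  have hij : i + jj = n := by
    have hcnt : (true :: rest).count true = 1 + q.count true + r.count true := by
      conv_lhs => rw [hpeq]
      simp [List.count_append, List.count_cons]
      omega
    have hc2 := hp.2.1
    omega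
  have hrdyck : IsDyckPath jj r := by
    refine ⟨hrlen, rfl, ?_⟩
    intro l
    have h'' := List.take_prefix l r
    set s'' := r.take l
    clear_value s''
    have h1 := dyck_prefix hp (hrpre s'' h'')
    simp [List.count_append, List.count_cons] at h1
    omega
  have hrH : HeightLE r (H + 1) := by
    intro l
    have h'' := List.take_prefix l r
    set s'' := r.take l
    clear_value s''
    have h1 := height_prefix hH (hrpre s'' h'')
    simp [List.count_append, List.count_cons] at h1
    omega
  exact ⟨i, jj, q, r, hij, hpeq, hqdyck, hqH, hrdyck, hrH⟩

lemma compose_inj {i i' : ℕ} {q q' r r' : List Bool}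
    (hq : IsDyckPath i q) (hq' : IsDyckPath i' q')
    (h : true :: (q ++ false :: r) = true :: (q' ++ false :: r')) :
    q = q' ∧ r = r' := by
  have h' : q ++ false :: r = q' ++ false :: r' := by
    injection h
  have key : ∀ {a a' : ℕ} {u u' v v' : List Bool}, IsDyckPath a u → IsDyckPath a' u' →
      u.length < u'.length → u ++ false :: v = u' ++ false :: v' → False := by
    intro a a' u u' v v' hu hu' hlt heq
    have h1 : u ++ [false] <+: u ++ false :: v := by
      simp
    rw [heq] at h1
    have h2 : u' <+: u' ++ false :: v' := u'.prefix_append _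
    have h3 : u ++ [false] <+: u' :=
      List.prefix_of_prefix_length_le h1 h2 (by simp; omega)
    have h4 := dyck_prefix hu' h3
    have h5 := (dyck_counts hu).1
    have h6 := (dyck_counts hu).2
    simp [List.count_append] at h4
    omega
  have hlen : q.length = q'.length := by
    rcases Nat.lt_trichotomy q.length q'.length with h1 | h1 | h1
    · exact absurd (key hq hq' h1 h') (by simp)
    · exact h1
    · exact absurd (key hq' hq h1 h'.symm) (by simp)
  obtain ⟨h1, h2⟩ := List.append_inj h' hlen
  exact ⟨h1, by injection h2⟩

instance dyckFinite (H n : ℕ) : Finite {p : List Bool // IsDyckPath n p ∧ HeightLE p H} := by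
  haveI : Finite (List.Vector Bool (2 * n)) := inferInstance
  refine Finite.of_injective (β := List.Vector Bool (2 * n))
    (fun p => ⟨p.1, by rw [p.2.1.1]⟩) ?_
  intro a b hab
  have hab := congrArg List.Vector.toList hab
  exact Subtype.ext hab

lemma natCard_sigma {ι : Type*} [Fintype ι] (f : ι → Type*) [∀ i, Finite (f i)] :
    Nat.card (Σ i, f i) = ∑ i, Nat.card (f i) := by
  haveI := fun i => Fintype.ofFinite (f i)
  simp [Nat.card_eq_fintype_card]

lemma card_succ (H n : ℕ) :
    Nat.card {p : List Bool // IsDyckPath (n + 1) p ∧ HeightLE p (H + 1)} =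
      ∑ ij ∈ Finset.HasAntidiagonal.antidiagonal n,
        Nat.card {q : List Bool // IsDyckPath ij.1 q ∧ HeightLE q H} *
          Nat.card {r : List Bool // IsDyckPath ij.2 r ∧ HeightLE r (H + 1)} := by
  classical
  set Φ : (Σ ij : (Finset.HasAntidiagonal.antidiagonal n : Finset (ℕ × ℕ)),
      ({q : List Bool // IsDyckPath ij.1.1 q ∧ HeightLE q H} ×
       {r : List Bool // IsDyckPath ij.1.2 r ∧ HeightLE r (H + 1)})) →
      {p : List Bool // IsDyckPath (n + 1) p ∧ HeightLE p (H + 1)} :=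
    fun x => ⟨true :: (x.2.1.1 ++ false :: x.2.2.1), by
      have hij : x.1.1.1 + x.1.1.2 = n := Finset.HasAntidiagonal.mem_antidiagonal.mp x.1.2
      have := compose_mem x.2.1.2.1 x.2.1.2.2 x.2.2.2.1 x.2.2.2.2
      rw [show x.1.1.1 + x.1.1.2 + 1 = n + 1 by omega] at this
      exact this⟩ with hPhi
  have hbij : Function.Bijective Φ := by
    constructor
    · rintro ⟨⟨⟨i, j⟩, hij⟩, ⟨q, hq⟩, ⟨r, hr⟩⟩ ⟨⟨⟨i', j'⟩, hij'⟩, ⟨q', hq'⟩, ⟨r', hr'⟩⟩ heq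
      simp only [hPhi, Subtype.mk.injEq] at heq
      have hqd : IsDyckPath i q := hq.1
      have hqd' : IsDyckPath i' q' := hq'.1
      obtain ⟨rfl, rfl⟩ := compose_inj hqd hqd' (by rw [heq])
      have hi : i = i' := by
        rw [← hqd.2.1, ← hqd'.2.1]
      subst hi
      have hj : j = j' := by
        have := Finset.HasAntidiagonal.mem_antidiagonal.mp hij
        have := Finset.HasAntidiagonal.mem_antidiagonal.mp hij'
        omega
      subst hj
      rfl
    · rintro ⟨p, hp, hH⟩
      obtain ⟨i, j, q, r, hij, hpeq, hqd, hqH, hrd, hrH⟩ := dyck_decomp hp hH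
      exact ⟨⟨⟨(i, j), Finset.HasAntidiagonal.mem_antidiagonal.mpr hij⟩, ⟨q, hqd, hqH⟩, ⟨r, hrd, hrH⟩⟩,
        Subtype.ext hpeq.symm⟩
  rw [← Nat.card_congr (Equiv.ofBijective Φ hbij)]
  rw [natCard_sigma]
  rw [← Finset.sum_coe_sort (Finset.HasAntidiagonal.antidiagonal n)]
  exact Finset.sum_congr rfl fun ij _ => Nat.card_prod _ _

lemma card_height_zero (n : ℕ) (hn : 1 ≤ n) :
    Nat.card {p : List Bool // IsDyckPath n p ∧ HeightLE p 0} = 0 := by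
  rw [Nat.card_eq_zero]
  left
  constructor
  rintro ⟨p, hp, hH⟩
  obtain ⟨b, rest, rfl⟩ : ∃ b rest, p = b :: rest := by
    cases p with
    | nil =>
      have := hp.1
      simp at this
      omega
    | cons b rest => exact ⟨b, rest, rfl⟩
  have h1 := hp.2.2 1
  have h2 := hH 1
  cases b <;> simp at h1 h2

lemma card_semilength_zero (H : ℕ) :
    Nat.card {p : List Bool // IsDyckPath 0 p ∧ HeightLE p H} = 1 := by
  rw [Nat.card_eq_one_iff_unique]
  constructor
  · constructor
    rintro ⟨p, hp, -⟩ ⟨p', hp', -⟩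
    have h1 := hp.1
    have h2 := hp'.1
    rw [List.length_eq_zero_iff] at h1 h2
    simp [h1, h2]
  · exact ⟨⟨[], ⟨by simp, by simp, fun i => by simp⟩, fun i => by simp⟩⟩

lemma chebQ_zero : chebQ 0 = 1 := by
  unfold chebQ
  rw [Finset.range_one, Finset.sum_singleton]
  rw [show ((0 : ℕ) : ℤ) = 0 from rfl, U_zero]
  simp

lemma chebQ_one : chebQ 1 = 1 := by
  unfold chebQ
  rw [show (1 : ℕ) / 2 + 1 = 1 from rfl, Finset.range_one, Finset.sum_singleton]
  rw [show ((1 : ℕ) : ℤ) = 1 from rfl, U_one]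
  simp [Polynomial.coeff_ofNat_mul, Polynomial.coeff_X]

lemma chebQ_coeff_zero : ∀ k, (chebQ k).coeff 0 = 1
  | 0 => by rw [chebQ_zero]; simp
  | 1 => by rw [chebQ_one]; simp
  | (k + 2) => by
    rw [chebQ_rec, Polynomial.coeff_sub, Polynomial.mul_coeff_zero]
    simp [chebQ_coeff_zero (k + 1)]

lemma chebQ_eval : ∀ (k : ℕ) (t : ℚ), t ≠ 0 →
    (chebQ k).eval (1 / (4 * t ^ 2)) * (2 * t) ^ k = (U ℚ k).eval t
  | 0, t, ht => by
    rw [chebQ_zero, show ((0 : ℕ) : ℤ) = 0 from rfl, U_zero]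
    simp
  | 1, t, ht => by
    rw [chebQ_one, show ((1 : ℕ) : ℤ) = 1 from rfl, U_one]
    simp
  | (k + 2), t, ht => by
    have h1 := chebQ_eval (k + 1) t ht
    have h0 := chebQ_eval k t ht
    rw [chebQ_rec, show ((k + 2 : ℕ) : ℤ) = (k : ℤ) + 2 by push_cast; ring, U_add_two]
    rw [show (k : ℤ) + 1 = ((k + 1 : ℕ) : ℤ) by push_cast; ring]
    rw [Polynomial.eval_sub, Polynomial.eval_mul, Polynomial.eval_X,
      Polynomial.eval_sub, Polynomial.eval_mul, Polynomial.eval_mul,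
      Polynomial.eval_ofNat, Polynomial.eval_X]
    have key : 1 / (4 * t ^ 2) * (2 * t) ^ (k + 2) = (2 * t) ^ k := by
      have h4 : (4 : ℚ) * t ^ 2 ≠ 0 := mul_ne_zero (by norm_num) (pow_ne_zero 2 ht)
      field_simp
      ring
    linear_combination (2 * t) * h1 - h0 - ((chebQ k).eval (1 / (4 * t ^ 2))) * key

noncomputable def dyckGF (H : ℕ) : PowerSeries ℚ :=
  PowerSeries.mk fun n => (Nat.card {p : List Bool // IsDyckPath n p ∧ HeightLE p H} : ℚ)

lemma dyckGF_zero : dyckGF 0 = 1 := by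
  ext n
  rw [dyckGF, PowerSeries.coeff_mk]
  cases n with
  | zero => simp [card_semilength_zero]
  | succ n => simp [card_height_zero (n + 1) (by omega), PowerSeries.coeff_one]

lemma dyckGF_succ (H : ℕ) :
    dyckGF (H + 1) = 1 + PowerSeries.X * (dyckGF H * dyckGF (H + 1)) := by
  ext n
  cases n with
  | zero =>
    simp [dyckGF, card_semilength_zero]
  | succ n =>
    rw [map_add, PowerSeries.coeff_one, PowerSeries.coeff_succ_X_mul, PowerSeries.coeff_mul]
    simp only [dyckGF, PowerSeries.coeff_mk]
    rw [card_succ H n]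
    push_cast
    simp

lemma dyckGF_mul_chebQ : ∀ H : ℕ,
    dyckGF H * (chebQ (H + 1) : PowerSeries ℚ) = (chebQ H : PowerSeries ℚ) := by
  intro H
  induction H with
  | zero => rw [dyckGF_zero, chebQ_zero, chebQ_one, one_mul]
  | succ H ih =>
    have hrec : ((chebQ (H + 2) : Polynomial ℚ) : PowerSeries ℚ) =
        (chebQ (H + 1) : PowerSeries ℚ) - PowerSeries.X * (chebQ H : PowerSeries ℚ) := by
      rw [chebQ_rec]
      push_cast
      ring
    rw [hrec]
    have h2 := dyckGF_succ H
    linear_combination (chebQ (H + 1) : PowerSeries ℚ) * h2 +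
      (PowerSeries.X * dyckGF (H + 1)) * ih

/-- For `m ≥ 2`, the quotient `U_{m-2}(1/(2√x)) / (√x · U_{m-1}(1/(2√x)))` of Chebyshev
polynomials of the second kind, regarded as a power series in `x` (it equals
`chebQ (m-2) / chebQ (m-1)`, since `chebQ k = x^(k/2)·U_k(1/(2√x))`, as certified by
the second conjunct), is the generating function for Dyck paths of height at most
`m-2`: its `n`-th coefficient is the number of Dyck paths of semilength `n` of height
at most `m-2`. -/
theorem dyck_bounded_height_chebyshev (m : ℕ) (hm : 2 ≤ m) :
    (∀ n : ℕ, 1 ≤ n →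
      (Nat.card {p : List Bool // IsDyckPath n p ∧ HeightLE p (m - 2)} : ℚ) =
        PowerSeries.coeff (R := ℚ) n
          ((chebQ (m - 2) : PowerSeries ℚ) * ((chebQ (m - 1) : PowerSeries ℚ))⁻¹)) ∧
    ∀ k : ℕ, ∀ t : ℚ, t ≠ 0 →
      (chebQ k).eval (1 / (4 * t ^ 2)) * (2 * t) ^ k =
        (Polynomial.Chebyshev.U ℚ k).eval t := by
  constructor
  · intro n hn
    have hinv : (chebQ (m - 1) : PowerSeries ℚ) * ((chebQ (m - 1) : PowerSeries ℚ))⁻¹ = 1 :=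
      PowerSeries.mul_inv_cancel _
        (by rw [Polynomial.constantCoeff_coe, chebQ_coeff_zero]; exact one_ne_zero)
    have h := dyckGF_mul_chebQ (m - 2)
    rw [show m - 2 + 1 = m - 1 by omega] at h
    have hF : dyckGF (m - 2) =
        (chebQ (m - 2) : PowerSeries ℚ) * ((chebQ (m - 1) : PowerSeries ℚ))⁻¹ := by
      rw [← h, mul_assoc, hinv, mul_one]
    rw [← hF, dyckGF, PowerSeries.coeff_mk]
  · exact chebQ_eval
end
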